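/- For every dyadic rational x ∈ (0,1) (i.e. x = k/2^n for some integers k, n with 0 < x < 1), the level set L(T(x)) = {x' ∈ [0,1] : T(x') = T(x)} is an infinite set. -/

import Mathlib

open Set MeasureTheory ENNReal

/-- `phi x` is the distance from `x` to the nearest integer. -/
noncomputable def phi (x : ℝ) : ℝ := |x - (round x : ℤ)|

/-- The Takagi function. -/
noncomputable def T (x : ℝ) : ℝ := ∑' n : ℕ, phi (2 ^ n * x) / 2 ^ n

/-- The `n`-th binary digit of `x` (terminating expansion for dyadic rationals). -/
noncomputable def eps (n : ℕ) (x : ℝ) : ℤ := ⌊2 ^ n * x⌋ - 2 * ⌊2 ^ (n - 1) * x⌋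

/-- `D k x = ∑_{j=1}^k (-1)^{ε_j(x)}`, the excess of 0 digits over 1 digits. -/
noncomputable def D (k : ℕ) (x : ℝ) : ℤ := ∑ j ∈ Finset.Icc 1 k, (1 - 2 * eps j x)

/-- The level set of the Takagi function at level `y`. -/
def L (y : ℝ) : Set ℝ := {x | x ∈ Set.Icc (0:ℝ) 1 ∧ T x = y}

/-- `x` is a balanced dyadic rational of order `m`. -/
def BalancedOfOrder (x : ℝ) (m : ℕ) : Prop :=
  x ∈ Set.Ico (0:ℝ) 1 ∧ (∃ k : ℤ, x = (k : ℝ) / 2 ^ (2 * m)) ∧ D (2 * m) x = 0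

/-- The generation of a balanced dyadic rational of order `m`:
the number of indices `1 ≤ j ≤ 2m` with `D j x = 0`. -/
noncomputable def generation (x : ℝ) (m : ℕ) : ℕ :=
  ((Finset.Icc 1 (2 * m)).filter (fun j => D j x = 0)).card

/-- A balanced dyadic rational of order `m` is leading if `D j x ≥ 0` for all `1 ≤ j ≤ 2m`. -/
def Leading (x : ℝ) (m : ℕ) : Prop := ∀ j ∈ Finset.Icc 1 (2 * m), 0 ≤ D j x

/-- The equivalence relation whose classes are the local level sets. -/
def locSetoid : Setoid ℝ where
  r x x' := ∀ n : ℕ, 1 ≤ n → |D n x| = |D n x'|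
  iseqv := ⟨fun _ _ _ => rfl, fun h n hn => (h n hn).symm,
    fun h g n hn => (h n hn).trans (g n hn)⟩

/-- The set of local level sets contained in `L y`: the image of `L y ∩ [0,1)`
under the quotient map of `locSetoid`. -/
def locClasses (y : ℝ) : Set (Quotient locSetoid) :=
  Quotient.mk locSetoid '' (L y ∩ Set.Ico (0:ℝ) 1)


lemma phi_nonneg (x : ℝ) : 0 ≤ phi x := abs_nonneg _

lemma phi_le_half (x : ℝ) : phi x ≤ 1/2 := abs_sub_round x

lemma phi_min (x : ℝ) : phi x = min (Int.fract x) (1 - Int.fract x) := by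
  simpa [phi] using abs_sub_round_eq_min x

lemma phi_add_int (x : ℝ) (m : ℤ) : phi (x + m) = phi x := by
  simp [phi_min, Int.fract_add_intCast]

lemma phi_int_add (x : ℝ) (m : ℤ) : phi ((m:ℝ) + x) = phi x := by
  rw [add_comm]; exact phi_add_int x m

lemma phi_neg (x : ℝ) : phi (-x) = phi x := by
  rcases eq_or_ne (Int.fract x) 0 with h | h
  · obtain ⟨m, rfl⟩ : ∃ m : ℤ, x = m := ⟨⌊x⌋, by
      unfold Int.fract at h; linarith⟩
    have : Int.fract (-(m:ℝ)) = 0 := by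
      rw [show -(m:ℝ) = ((-m : ℤ) : ℝ) by push_cast; ring, Int.fract_intCast]
    simp [phi_min, this, Int.fract_intCast]
  · rw [phi_min, phi_min, Int.fract_neg h]
    rw [min_comm]
    congr 1 <;> ring

lemma phi_eq_self {x : ℝ} (h0 : 0 ≤ x) (h1 : x ≤ 1/2) : phi x = x := by
  rw [phi_min, Int.fract_eq_self.mpr ⟨h0, by linarith⟩]
  exact min_eq_left (by linarith)

lemma phi_eq_one_sub {x : ℝ} (h0 : 1/2 ≤ x) (h1 : x ≤ 1) : phi x = 1 - x := by
  have : phi x = phi (1 - x) := by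
    rw [← phi_neg (1 - x), show -(1-x) = x + ((-1 : ℤ):ℝ) by push_cast; ring, phi_add_int]
  rw [this, phi_eq_self (by linarith) (by linarith)]

lemma phi_intCast (m : ℤ) : phi (m : ℝ) = 0 := by
  rw [show (m:ℝ) = 0 + (m:ℝ) by ring, phi_add_int]
  simp [phi]

lemma summable_T (x : ℝ) : Summable (fun n : ℕ => phi (2 ^ n * x) / 2 ^ n) := by
  apply Summable.of_nonneg_of_le (fun n => div_nonneg (phi_nonneg _) (by positivity))
    (fun n => ?_) summable_geometric_two
  have h := phi_le_half (2 ^ n * x)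
  have h2 : (0:ℝ) < 2 ^ n := by positivity
  rw [div_le_iff₀ h2]
  calc phi (2 ^ n * x) ≤ 1/2 := h
    _ ≤ 1 := by norm_num
    _ = (1/2:ℝ)^n * 2^n := by rw [div_pow, one_pow, div_mul_cancel₀]; positivity

lemma T_intCast (m : ℤ) : T (m : ℝ) = 0 := by
  have : ∀ n : ℕ, phi (2 ^ n * (m:ℝ)) / 2 ^ n = 0 := fun n => by
    rw [show (2:ℝ) ^ n * (m:ℝ) = ((2^n * m : ℤ) : ℝ) by push_cast; ring, phi_intCast]
    simp
  simp [T, this]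

lemma T_zero : T 0 = 0 := by simpa using T_intCast 0
lemma T_one : T 1 = 0 := by simpa using T_intCast 1

lemma T_one_sub (x : ℝ) : T (1 - x) = T x := by
  unfold T
  congr 1; funext n; congr 1
  rw [mul_sub, mul_one,
    show (2:ℝ)^n - 2^n * x = -(2^n * x) + ((2^n : ℤ):ℝ) by push_cast; ring,
    phi_add_int, phi_neg]

lemma T_half {t : ℝ} (h0 : 0 ≤ t) (h1 : t ≤ 1) : T (t/2) = t/2 + T t / 2 := by
  unfold T
  rw [Summable.tsum_eq_zero_add (summable_T _)]
  have e0 : phi (2 ^ (0:ℕ) * (t/2)) / 2 ^ (0:ℕ) = t/2 := by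
    simp only [pow_zero, one_mul, div_one]
    exact phi_eq_self (by linarith) (by linarith)
  have en : ∀ n : ℕ, phi (2 ^ (n+1) * (t/2)) / 2 ^ (n+1) = (phi (2^n * t) / 2^n) / 2 := by
    intro n
    rw [show (2:ℝ)^(n+1) * (t/2) = 2^n * t by ring, pow_succ]
    ring
  rw [e0]
  congr 1
  simp_rw [en]
  rw [tsum_div_const]

lemma T_half_add {t : ℝ} (h0 : 0 ≤ t) (h1 : t ≤ 1) :
    T ((1+t)/2) = (1-t)/2 + T t / 2 := by
  unfold T
  rw [Summable.tsum_eq_zero_add (summable_T _)]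
  have e0 : phi (2 ^ (0:ℕ) * ((1+t)/2)) / 2 ^ (0:ℕ) = (1-t)/2 := by
    simp only [pow_zero, one_mul, div_one]
    rw [phi_eq_one_sub (by linarith) (by linarith)]
    ring
  have en : ∀ n : ℕ, phi (2 ^ (n+1) * ((1+t)/2)) / 2 ^ (n+1)
      = (phi (2^n * t) / 2^n) / 2 := by
    intro n
    rw [show (2:ℝ)^(n+1) * ((1+t)/2) = ((2^n : ℤ):ℝ) + 2^n * t by push_cast; ring,
      phi_int_add, pow_succ]
    ring
  rw [e0]
  congr 1
  simp_rw [en]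
  rw [tsum_div_const]

lemma T_quarter {t : ℝ} (h0 : 0 ≤ t) (h1 : t ≤ 1) : T ((2+t)/4) = 1/2 + T t / 4 := by
  have h := T_half_add (t := t/2) (by linarith) (by linarith)
  rw [show (1 + t/2)/2 = (2+t)/4 by ring] at h
  rw [h, T_half h0 h1]; ring

lemma T_div_pow {t : ℝ} (h0 : 0 ≤ t) (h1 : t ≤ 1) :
    ∀ j : ℕ, T (t / 2^j) = (j * t + T t) / 2^j := by
  intro j
  induction j with
  | zero => simp
  | succ j ih =>
    have ht' : t / 2^j ≤ 1 := by
      rw [div_le_one (by positivity)]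
      calc t ≤ 1 := h1
        _ ≤ 2^j := one_le_pow₀ (by norm_num)
    have h := T_half (t := t/2^j) (by positivity) ht'
    rw [show t/2^j/2 = t/2^(j+1) by rw [pow_succ]; ring] at h
    rw [h, ih, pow_succ]
    push_cast
    field_simp
    ring

/-- slope coefficient of `T` on the dyadic interval `[k/2^n, (k+1)/2^n]`. -/
def Bc : ℕ → ℤ → ℤ
  | 0, _ => 0
  | n+1, k => if k % 2 = 0 then Bc n (k/2) + 1 else Bc n (k/2) - 1

/-- constant coefficient of `T` on the dyadic interval `[k/2^n, (k+1)/2^n]`. -/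
def Ac : ℕ → ℤ → ℤ
  | 0, _ => 0
  | n+1, k => if k % 2 = 0 then 2 * Ac n (k/2) else 2 * Ac n (k/2) + Bc n (k/2) + 1

lemma T_selfaffine : ∀ (n : ℕ) (k : ℤ), 0 ≤ k → k < 2^n →
    ∀ t ∈ Icc (0:ℝ) 1, T (((k:ℝ)+t)/2^n) = ((Ac n k : ℝ) + (Bc n k : ℝ) * t + T t)/2^n := by
  intro n
  induction n with
  | zero =>
    intro k hk0 hk1 t ht
    have : k = 0 := by omega
    subst this
    simp [Ac, Bc]
  | succ n ih =>
    intro k hk0 hk1 t ht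
    obtain ⟨ht0, ht1⟩ := ht
    have hq0 : 0 ≤ k / 2 := by omega
    have hq1 : k / 2 < 2^n := by
      have : (2:ℤ)^(n+1) = 2 * 2^n := by ring
      omega
    rcases Int.even_or_odd k with ⟨q, hq⟩ | ⟨q, hq⟩
    · -- k even
      have hdiv : k / 2 = q := by omega
      have hmod : k % 2 = 0 := by omega
      have hu : t/2 ∈ Icc (0:ℝ) 1 := ⟨by linarith, by linarith⟩
      have key : ((k:ℝ)+t)/2^(n+1) = ((q:ℝ) + t/2)/2^n := by
        have : (k:ℝ) = 2*q := by
          have := congrArg (Int.cast : ℤ → ℝ) hq; push_cast at this; linarith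
        rw [this, pow_succ]
        ring
      rw [key, ih q (by omega) (by omega) _ hu, T_half ht0 ht1]
      rw [Bc, Ac, if_pos hmod, if_pos hmod, hdiv]
      push_cast
      rw [pow_succ]
      field_simp
      ring
    · -- k odd
      have hdiv : k / 2 = q := by omega
      have hmod : ¬ (k % 2 = 0) := by omega
      have hu : (1+t)/2 ∈ Icc (0:ℝ) 1 := ⟨by linarith, by linarith⟩
      have key : ((k:ℝ)+t)/2^(n+1) = ((q:ℝ) + (1+t)/2)/2^n := by
        have : (k:ℝ) = 2*q+1 := by
          have := congrArg (Int.cast : ℤ → ℝ) hq; push_cast at this; linarith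
        rw [this, pow_succ]
        ring
      rw [key, ih q (by omega) (by omega) _ hu, T_half_add ht0 ht1]
      rw [Bc, Ac, if_neg hmod, if_neg hmod, hdiv]
      push_cast
      rw [pow_succ]
      field_simp
      ring

/-- an increasing sequence of fixed points of `T`. -/
noncomputable def g : ℕ → ℝ
  | 0 => 0
  | j+1 => (2 + g j)/4

lemma g_mem : ∀ j, 0 ≤ g j ∧ g j < 2/3 := by
  intro j
  induction j with
  | zero => norm_num [g]
  | succ j ih =>
    obtain ⟨h1, h2⟩ := ih
    constructor
    · simp only [g]; linarith
    · simp only [g]; linarith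

lemma g_strictMono : StrictMono g := by
  apply strictMono_nat_of_lt_succ
  intro j
  have := g_mem j
  simp only [g]
  linarith [this.1, this.2]

lemma T_g : ∀ j, T (g j) = g j := by
  intro j
  induction j with
  | zero => simpa [g] using T_zero
  | succ j ih =>
    have h := g_mem j
    simp only [g]
    rw [T_quarter h.1 (by linarith [h.2])]
    rw [ih]
    ring

lemma T_fix_scaled (c : ℕ) (hc : 1 ≤ c) (j : ℕ) :
    T (g j / 2^(c-1)) = c * (g j / 2^(c-1)) := by
  have h := g_mem j
  rw [T_div_pow h.1 (by linarith [h.2]) (c-1), T_g]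
  have : ((c-1 : ℕ) : ℝ) = (c:ℝ) - 1 := by
    have : (1:ℕ) ≤ c := hc
    push_cast [Nat.cast_sub this]
    ring
  rw [this]
  ring

lemma Bc_adjacent (n : ℕ) (hn : 1 ≤ n) (k : ℤ) (hk : k % 2 = 1) :
    Bc n (k-1) = Bc n k + 2 := by
  obtain ⟨m, rfl⟩ : ∃ m, n = m + 1 := ⟨n-1, by omega⟩
  have h1 : (k-1) % 2 = 0 := by omega
  have h2 : (k-1)/2 = k/2 := by omega
  rw [Bc, Bc, if_pos h1, if_neg (by omega), h2]
  ring

lemma exists_odd_rep (x : ℝ) (hx0 : 0 < x) (hx1 : x < 1) :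
    ∀ (n : ℕ) (k : ℤ), x = (k : ℝ) / 2 ^ n →
    ∃ (m : ℕ) (j : ℤ), 1 ≤ m ∧ j % 2 = 1 ∧ 0 < j ∧ j < 2^m ∧ x = (j : ℝ) / 2 ^ m := by
  intro n
  induction n with
  | zero =>
    intro k hk
    exfalso
    rw [pow_zero, div_one] at hk
    subst hk
    have h0 : 0 < k := by exact_mod_cast hx0
    have h1 : k < 1 := by exact_mod_cast hx1
    omega
  | succ n ih =>
    intro k hk
    have hpow : (0:ℝ) < 2 ^ (n+1) := by positivity
    have hk0 : 0 < k := by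
      by_contra h
      push_neg at h
      have : (k:ℝ) ≤ 0 := by exact_mod_cast h
      have : x ≤ 0 := by rw [hk]; exact div_nonpos_of_nonpos_of_nonneg this hpow.le
      linarith
    have hk1 : k < 2^(n+1) := by
      by_contra h
      push_neg at h
      have : ((2:ℤ)^(n+1) : ℝ) ≤ (k:ℝ) := by exact_mod_cast h
      have h2 : (1:ℝ) ≤ x := by
        rw [hk, le_div_iff₀ hpow, one_mul]
        calc (2:ℝ)^(n+1) = ((2:ℤ)^(n+1) : ℝ) := by push_cast; ring
          _ ≤ k := this
      linarith
    rcases Int.even_or_odd k with ⟨q, hq⟩ | ⟨q, hq⟩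
    · apply ih q
      rw [hk]
      have : (k:ℝ) = 2*q := by
        have := congrArg (Int.cast : ℤ → ℝ) hq; push_cast at this; linarith
      rw [this, pow_succ]
      field_simp
    · exact ⟨n+1, k, by omega, by omega, hk0, hk1, hk⟩


theorem stmt2 (x : ℝ) (hx0 : 0 < x) (hx1 : x < 1)
    (hdyadic : ∃ (k : ℤ) (n : ℕ), x = (k : ℝ) / 2 ^ n) :
    (L (T x)).Infinite := by
  obtain ⟨k0, n0, hrep⟩ := hdyadic
  obtain ⟨n, k, hn, hodd, hk0, hk1, rfl⟩ := exists_odd_rep _ hx0 hx1 n0 k0 hrep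
  clear hrep hx0 hx1
  have hpow : (0:ℝ) < 2 ^ n := by positivity
  have hk1R : (k:ℝ) < 2^n := by exact_mod_cast hk1
  have hk0R : (0:ℝ) < (k:ℝ) := by exact_mod_cast hk0
  set b : ℤ := Bc n k with hb
  by_cases hbneg : b ≤ -1
  -- Case: right slope negative; use points to the right of x
  · set c : ℕ := (-b).toNat with hc
    have hc1 : 1 ≤ c := by omega
    have hcb : (c : ℝ) = -(b:ℝ) := by
      have : (c:ℤ) = -b := by omega
      exact_mod_cast congrArg (Int.cast : ℤ → ℝ) this
    set u : ℕ → ℝ := fun j => g j / 2^(c-1) with hu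
    have humem : ∀ j, 0 ≤ u j ∧ u j < 1 := by
      intro j
      have h := g_mem j
      have h2 : (1:ℝ) ≤ 2^(c-1) := one_le_pow₀ (by norm_num)
      constructor
      · exact div_nonneg h.1 (by positivity)
      · rw [div_lt_one (by positivity)]
        linarith [h.2]
    apply Set.infinite_of_injective_forall_mem
      (f := fun j : ℕ => ((k:ℝ) + u j)/2^n)
    · intro i j hij
      have : u i = u j := by
        field_simp at hij
        have := hij
        nlinarith [hpow]
      have : g i = g j := by
        have h2 : (0:ℝ) < 2^(c-1) := by positivity
        simp only [hu] at this
        rw [div_left_inj' h2.ne'] at this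
        exact this
      exact g_strictMono.injective this
    · intro j
      have hj := humem j
      have hTx : T ((k:ℝ)/2^n) = ((Ac n k : ℝ))/2^n := by
        have := T_selfaffine n k (by omega) hk1 0 ⟨le_refl 0, by norm_num⟩
        rw [add_zero, T_zero] at this
        rw [this]; ring
      have hTj : T (((k:ℝ) + u j)/2^n) = ((Ac n k : ℝ))/2^n := by
        have := T_selfaffine n k (by omega) hk1 (u j) ⟨hj.1, hj.2.le⟩
        rw [this, hu]
        have := T_fix_scaled c hc1 j
        rw [this, hcb]
        ring
      refine ⟨⟨?_, ?_⟩, by rw [hTj, hTx]⟩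
      · apply div_nonneg _ hpow.le
        linarith [hj.1]
      · rw [div_le_one hpow]
        have : (k:ℝ) + 1 ≤ 2^n := by
          have : k + 1 ≤ 2^n := by omega
          calc (k:ℝ) + 1 = ((k+1 : ℤ):ℝ) := by push_cast; ring
            _ ≤ ((2^n : ℤ):ℝ) := by exact_mod_cast this
            _ = 2^n := by push_cast; ring
        linarith [hj.2]
  -- Case: right slope ≥ 0; left slope = b + 2 ≥ 2, use points to the left
  · push_neg at hbneg
    have hb' : Bc n (k-1) = b + 2 := Bc_adjacent n hn k hodd
    set c : ℕ := (b+2).toNat with hc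
    have hc1 : 1 ≤ c := by omega
    have hcb : (c : ℝ) = (b:ℝ) + 2 := by
      have : (c:ℤ) = b + 2 := by omega
      have := congrArg (Int.cast : ℤ → ℝ) this
      push_cast at this
      linarith
    set u : ℕ → ℝ := fun j => g j / 2^(c-1) with hu
    have humem : ∀ j, 0 ≤ u j ∧ u j < 1 := by
      intro j
      have h := g_mem j
      have h2 : (1:ℝ) ≤ 2^(c-1) := one_le_pow₀ (by norm_num)
      constructor
      · exact div_nonneg h.1 (by positivity)
      · rw [div_lt_one (by positivity)]
        linarith [h.2]
    apply Set.infinite_of_injective_forall_mem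
      (f := fun j : ℕ => ((k:ℝ) - u j)/2^n)
    · intro i j hij
      have : u i = u j := by
        field_simp at hij
        nlinarith [hpow]
      have : g i = g j := by
        have h2 : (0:ℝ) < 2^(c-1) := by positivity
        simp only [hu] at this
        rw [div_left_inj' h2.ne'] at this
        exact this
      exact g_strictMono.injective this
    · intro j
      have hj := humem j
      have hkm1 : (0:ℤ) ≤ k - 1 := by omega
      have hkm1' : k - 1 < 2^n := by omega
      have cast1 : ((k - 1 : ℤ):ℝ) = (k:ℝ) - 1 := by push_cast; ring
      have hTx : T ((k:ℝ)/2^n) = ((Ac n (k-1) : ℝ) + (Bc n (k-1) : ℝ))/2^n := by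
        have := T_selfaffine n (k-1) hkm1 hkm1' 1 ⟨by norm_num, le_refl 1⟩
        rw [T_one, cast1] at this
        rw [show (k:ℝ) - 1 + 1 = (k:ℝ) by ring] at this
        rw [this]; ring
      have hTj : T (((k:ℝ) - u j)/2^n)
          = ((Ac n (k-1) : ℝ) + (Bc n (k-1) : ℝ))/2^n := by
        have key := T_selfaffine n (k-1) hkm1 hkm1' (1 - u j)
          ⟨by linarith [hj.2], by linarith [hj.1]⟩
        rw [cast1] at key
        rw [show (k:ℝ) - 1 + (1 - u j) = (k:ℝ) - u j by ring] at key
        rw [key, T_one_sub, hu]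
        have := T_fix_scaled c hc1 j
        rw [this, hcb]
        have hbb' : ((Bc n (k-1) : ℤ):ℝ) = (b:ℝ) + 2 := by
          rw [hb']; push_cast; ring
        rw [hbb']
        ring
      refine ⟨⟨?_, ?_⟩, by rw [hTj, hTx]⟩
      · apply div_nonneg _ hpow.le
        have : (1:ℝ) ≤ (k:ℝ) := by exact_mod_cast hk0
        linarith [hj.2]
      · rw [div_le_one hpow]
        linarith [hj.1]
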